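/- arXiv:2403.01839 — 8 statements merged into one kernel-verified Lean document; each statement's English description precedes it below -/
import Mathlib

section
/- Let R be a commutative ring and let A be an n×n alternating matrix over R, i.e., Aᵀ = −A and every diagonal entry of A is zero. Then det A is a square in R: there exists p ∈ R such that det A = p². -/
open Matrix

private lemma alt_det_sq_field (K : Type*) [Field K] [CharZero K] :
    ∀ n : ℕ, ∀ A : Matrix (Fin n) (Fin n) K, Aᵀ = -A → ∃ p : K, A.det = p ^ 2 := by
  intro n
  induction n using Nat.strong_induction_on with
  | _ n ih =>
    match n with
    | 0 => exact fun A _ => ⟨1, by simp⟩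
    | 1 =>
      intro A hA
      have h0 : A 0 0 = 0 := by
        have := congrFun (congrFun hA 0) 0
        simp only [transpose_apply, Matrix.neg_apply] at this
        have h2 : (2:K) * A 0 0 = 0 := by linear_combination this
        exact (mul_eq_zero.mp h2).resolve_left two_ne_zero
      exact ⟨0, by simp [Matrix.det_fin_one, h0]⟩
    | (n+2) =>
      intro A hA
      have hskew : ∀ i j, A j i = - A i j := fun i j => by
        have := congrFun (congrFun hA i) j
        simpa using this
      have hdiag : ∀ i, A i i = 0 := fun i => by
        have h2 : (2:K) * A i i = 0 := by linear_combination hskew i i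
        exact (mul_eq_zero.mp h2).resolve_left two_ne_zero
      by_cases hc : ∀ i, A i 0 = 0
      · exact ⟨0, by rw [Matrix.det_eq_zero_of_column_eq_zero 0 hc]; ring⟩
      push_neg at hc
      obtain ⟨j, hj⟩ := hc
      have hj0 : j ≠ 0 := fun h => hj (h ▸ hdiag 0)
      set c := A j 0 with hc
      set σ : Equiv.Perm (Fin (n+2)) := Equiv.swap 1 j with hσ
      let e : Fin 2 ⊕ Fin n ≃ Fin (n+2) := finSumFinEquiv.trans (finCongr (by omega))
      let g : Fin 2 ⊕ Fin n ≃ Fin (n+2) := e.trans σ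
      have he0 : e (Sum.inl 0) = 0 := by
        apply Fin.ext; simp [e, finSumFinEquiv]
      have he1 : e (Sum.inl 1) = 1 := by
        apply Fin.ext; simp [e, finSumFinEquiv]
      have hg0 : g (Sum.inl 0) = 0 := by
        show σ (e (Sum.inl 0)) = 0
        rw [he0, hσ]
        exact Equiv.swap_apply_of_ne_of_ne (by simp) (Ne.symm hj0)
      have hg1 : g (Sum.inl 1) = j := by
        show σ (e (Sum.inl 1)) = j
        rw [he1, hσ]; exact Equiv.swap_apply_left 1 j
      set M : Matrix (Fin 2 ⊕ Fin n) (Fin 2 ⊕ Fin n) K := A.submatrix g g with hM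
      have hMdet : M.det = A.det := det_submatrix_equiv_self g A
      have hMskew : ∀ p q, M q p = - M p q := fun p q => hskew (g p) (g q)
      have hMT : Mᵀ = -M := by
        ext p q; simp only [transpose_apply, Matrix.neg_apply]; exact hMskew p q
      set B₁ := M.toBlocks₁₁ with hB₁
      set B₂ := M.toBlocks₁₂ with hB₂
      set B₃ := M.toBlocks₂₁ with hB₃def
      set B₄ := M.toBlocks₂₂ with hB₄
      have hB10 : B₁ 1 0 = c := by
        simp only [hB₁, toBlocks₁₁, of_apply, hM, submatrix_apply, hg0, hg1, hc]
      have hB01 : B₁ 0 1 = -c := by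
        simp only [hB₁, toBlocks₁₁, of_apply, hM, submatrix_apply, hg0, hg1, hc]
        exact hskew j 0
      have hB00 : B₁ 0 0 = 0 := by
        simp only [hB₁, toBlocks₁₁, of_apply, hM, submatrix_apply, hg0]; exact hdiag 0
      have hB11 : B₁ 1 1 = 0 := by
        simp only [hB₁, toBlocks₁₁, of_apply, hM, submatrix_apply, hg1]; exact hdiag j
      have hdetB₁ : B₁.det = c ^ 2 := by
        rw [Matrix.det_fin_two, hB10, hB01, hB00, hB11]; ring
      have hB₁u : IsUnit B₁.det := by
        rw [hdetB₁]; exact (pow_ne_zero 2 hj).isUnit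
      set X := -(B₁⁻¹ * B₂) with hX
      set Q : Matrix (Fin 2 ⊕ Fin n) (Fin 2 ⊕ Fin n) K := fromBlocks 1 X 0 1 with hQ
      have hQt : Qᵀ = fromBlocks 1 0 Xᵀ 1 := by
        rw [hQ, fromBlocks_transpose]; simp
      have hdetQ : Q.det = 1 := by
        rw [hQ, det_fromBlocks_zero₂₁]; simp
      have hB₃ : B₃ = -B₂ᵀ := by
        ext p q
        simp only [hB₃def, hB₂, toBlocks₂₁, toBlocks₁₂, of_apply, Matrix.neg_apply, transpose_apply]
        exact hMskew (Sum.inl q) (Sum.inr p)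
      have hB₁T : B₁ᵀ = -B₁ := by
        ext p q
        simp only [hB₁, toBlocks₁₁, of_apply, transpose_apply, Matrix.neg_apply]
        exact hMskew (Sum.inl p) (Sum.inl q)
      have hB₁X : B₁ * X = -B₂ := by
        rw [hX, Matrix.mul_neg, ← Matrix.mul_assoc, Matrix.mul_nonsing_inv _ hB₁u, Matrix.one_mul]
      have hneginv : (-B₁)⁻¹ = -(B₁⁻¹) := by
        apply Matrix.inv_eq_left_inv
        rw [neg_mul_neg, Matrix.nonsing_inv_mul _ hB₁u]
      have hXT : Xᵀ * B₁ = B₂ᵀ := by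
        have h1 : Xᵀ = B₂ᵀ * B₁⁻¹ := by
          rw [hX, transpose_neg, transpose_mul, Matrix.transpose_nonsing_inv, hB₁T, hneginv]
          simp [Matrix.mul_neg]
        rw [h1, Matrix.mul_assoc, Matrix.nonsing_inv_mul _ hB₁u, Matrix.mul_one]
      set C := Xᵀ * B₂ + B₄ with hC
      have hN : Qᵀ * M * Q = fromBlocks B₁ 0 0 C := by
        conv_lhs => rw [← fromBlocks_toBlocks M]
        rw [hQt, hQ, ← hB₁, ← hB₂, ← hB₃def, ← hB₄, fromBlocks_multiply, fromBlocks_multiply]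
        simp only [Matrix.one_mul, Matrix.mul_one, Matrix.zero_mul, Matrix.mul_zero,
          add_zero, zero_add, hXT, hB₃, hB₁X, neg_add_cancel, add_neg_cancel,
          Matrix.zero_mul, ← hC]
      have hNT : (Qᵀ * M * Q)ᵀ = -(Qᵀ * M * Q) := by
        rw [transpose_mul, transpose_mul, transpose_transpose, hMT]
        simp only [Matrix.neg_mul, Matrix.mul_neg, Matrix.mul_assoc]
      have hCs : Cᵀ = -C := by
        rw [hN] at hNT
        have h2 := congrArg Matrix.toBlocks₂₂ hNT
        rw [fromBlocks_transpose] at h2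
        simpa [Matrix.toBlocks_fromBlocks₂₂, Matrix.fromBlocks_neg] using h2
      obtain ⟨p, hp⟩ := ih n (by omega) C hCs
      have hdetN : B₁.det * C.det = A.det := by
        have h3 : (Qᵀ * M * Q).det = Qᵀ.det * M.det * Q.det := by
          rw [det_mul, det_mul]
        rw [hN, det_fromBlocks_zero₂₁, det_transpose, hdetQ, hMdet] at h3
        simpa using h3
      refine ⟨c * p, ?_⟩
      rw [← hdetN, hdetB₁, hp]; ring

private lemma alt_det_sq_generic (n : ℕ) :
    ∃ q : MvPolynomial (Fin n × Fin n) ℤ,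
      (Matrix.of fun i j : Fin n =>
        if i < j then MvPolynomial.X (i, j)
        else if j < i then -MvPolynomial.X (j, i) else 0).det = q ^ 2 := by
  set S := MvPolynomial (Fin n × Fin n) ℤ with hS
  set B : Matrix (Fin n) (Fin n) S := Matrix.of fun i j : Fin n =>
        if i < j then MvPolynomial.X (i, j)
        else if j < i then -MvPolynomial.X (j, i) else 0 with hB
  have hBs : ∀ i j, B j i = -B i j := by
    intro i j
    rcases lt_trichotomy i j with h | h | h
    · simp [hB, h, not_lt.mpr h.le, h.not_gt]
    · simp [hB, h]
    · simp [hB, h, not_lt.mpr h.le, h.not_gt]; exact (neg_neg (MvPolynomial.X (j, i) : MvPolynomial (Fin n × Fin n) ℤ)).symm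
  let K := FractionRing S
  haveI : CharZero K := charZero_of_injective_algebraMap (IsFractionRing.injective S K)
  set φ : S →+* K := algebraMap S K with hφ
  have hmapskew : (B.map φ)ᵀ = -(B.map φ) := by
    ext i j
    simp only [transpose_apply, map_apply, Matrix.neg_apply]
    rw [hBs i j, map_neg]
  obtain ⟨q, hq⟩ := alt_det_sq_field K n (B.map φ) hmapskew
  rw [show (B.map φ) = φ.mapMatrix B from rfl, ← RingHom.map_det] at hq
  have hint : IsIntegral S q := by
    refine ⟨Polynomial.X ^ 2 - Polynomial.C B.det, Polynomial.monic_X_pow_sub_C _ (by norm_num), ?_⟩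
    simp [Polynomial.eval₂_sub, Polynomial.eval₂_pow, ← hq, hφ]
  obtain ⟨p, hp⟩ := IsIntegrallyClosed.isIntegral_iff.mp hint
  refine ⟨p, IsFractionRing.injective S K ?_⟩
  rw [map_pow, hp, ← hq]

/-- The determinant of an alternating matrix over a commutative ring is a square
(namely the square of the Pfaffian). -/
theorem det_alternating_is_square {R : Type*} [CommRing R] {n : ℕ}
    (A : Matrix (Fin n) (Fin n) R) (hskew : Aᵀ = -A) (hdiag : ∀ i, A i i = 0) :
    ∃ p : R, A.det = p ^ 2 := by
  obtain ⟨q, hq⟩ := alt_det_sq_generic n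
  set φ : MvPolynomial (Fin n × Fin n) ℤ →+* R :=
    MvPolynomial.eval₂Hom (Int.castRingHom R) (fun ij => A ij.1 ij.2) with hφ
  have hs : ∀ i j, A j i = -A i j := fun i j => by
    have := congrFun (congrFun hskew i) j
    simpa using this
  have hmap : (Matrix.of fun i j : Fin n =>
        if i < j then MvPolynomial.X (i, j)
        else if j < i then -MvPolynomial.X (j, i) else 0).map φ = A := by
    ext i j
    rcases lt_trichotomy i j with h | h | h
    · simp [h, h.not_gt, hφ]
    · simp [h, hdiag j]
    · rw [map_apply, of_apply, if_neg (not_lt.mpr h.le), if_pos h, map_neg]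
      simp only [hφ, MvPolynomial.eval₂Hom_X']
      rw [hs i j, neg_neg]
  refine ⟨φ q, ?_⟩
  rw [← hmap, show ((Matrix.of fun i j : Fin n =>
        if i < j then MvPolynomial.X (i, j)
        else if j < i then -MvPolynomial.X (j, i) else 0).map φ) = φ.mapMatrix _ from rfl,
    ← RingHom.map_det, hq, map_pow]
end

section
/- Let F be a field and let A be an n×n alternating matrix over F (Aᵀ = −A and all diagonal entries zero). If X is a subset of the index set such that the rows of A indexed by X form a basis of the row space of A (equivalently, |X| equals the rank of A and the rows indexed by X are linearly independent), then the principal submatrix A[X, X] is nonsingular. -/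
open Matrix

/-- For an alternating matrix over a field, if the rows indexed by `X` form a basis of the
row space (i.e. they are linearly independent and `|X|` equals the rank), then the principal
submatrix `A[X, X]` is nonsingular. -/
theorem alternating_principal_submatrix_nonsingular {F : Type*} [Field F] {n : ℕ}
    (A : Matrix (Fin n) (Fin n) F) (hskew : Aᵀ = -A) (hdiag : ∀ i, A i i = 0)
    (X : Finset (Fin n))
    (hindep : LinearIndependent F (fun i : X => A (i : Fin n)))
    (hcard : X.card = A.rank) :
    (A.submatrix (fun i : X => (i : Fin n)) (fun j : X => (j : Fin n))).det ≠ 0 := by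
  classical
  set M : Matrix X X F := A.submatrix (fun i : X => (i : Fin n)) (fun j : X => (j : Fin n)) with hM
  set B : Matrix X (Fin n) F := A.submatrix (fun i : X => (i : Fin n)) id with hB
  have hcardX : Fintype.card X = X.card := Fintype.card_coe X
  -- span of the X-rows equals the full row space
  have hskew' : ∀ i j, A i j = - A j i := by
    intro i j
    have := congrFun (congrFun hskew j) i
    simpa [Matrix.transpose_apply] using this
  have hrowsub : Submodule.span F (Set.range fun i : X => A (i : Fin n)) ≤
      Submodule.span F (Set.range A) := by
    apply Submodule.span_mono
    rintro v ⟨i, rfl⟩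
    exact ⟨i, rfl⟩
  have hfin : FiniteDimensional F (Submodule.span F (Set.range A)) := by
    infer_instance
  have hfr1 : Module.finrank F (Submodule.span F (Set.range fun i : X => A (i : Fin n)))
      = X.card := by
    have h := linearIndependent_iff_card_eq_finrank_span.mp hindep
    rw [Set.finrank] at h
    rw [← h, hcardX]
  have hfr2 : Module.finrank F (Submodule.span F (Set.range A)) = A.rank := by
    rw [A.rank_eq_finrank_span_row]
    rfl
  have hspan_eq : Submodule.span F (Set.range fun i : X => A (i : Fin n)) =
      Submodule.span F (Set.range A) :=
    Submodule.eq_of_le_of_finrank_le hrowsub (by rw [hfr1, hfr2, hcard])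
  -- every row of A is in the span of the X-rows
  have hrow_mem : ∀ j : Fin n, A j ∈
      Submodule.span F (Set.range fun i : X => A (i : Fin n)) := by
    intro j
    rw [hspan_eq]
    exact Submodule.subset_span ⟨j, rfl⟩
  -- the linear map restricting to X and negating
  let φ : (Fin n → F) →ₗ[F] (X → F) :=
    { toFun := fun v => fun i : X => -(v (i : Fin n))
      map_add' := by intro v w; funext i; simp [neg_add]; ring
      map_smul' := by intro c v; funext i; simp }
  have hφB : ∀ j : Fin n, Bᵀ j = φ (A j) := by
    intro j
    funext i
    simp [φ, hB, Matrix.transpose_apply, Matrix.submatrix_apply, hskew' (i : Fin n) j]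
  have hφM : ∀ i' : X, φ (A (i' : Fin n)) = Mᵀ i' := by
    intro i'
    funext i
    simp [φ, hM, Matrix.transpose_apply, Matrix.submatrix_apply, hskew' (i : Fin n) (i' : Fin n)]
  -- columns of B lie in the span of columns of M
  have hcolB_mem : ∀ j : Fin n, Bᵀ j ∈ Submodule.span F (Set.range Mᵀ) := by
    intro j
    rw [hφB j]
    have := hrow_mem j
    have hmap : Submodule.map φ (Submodule.span F (Set.range fun i : X => A (i : Fin n)))
        ≤ Submodule.span F (Set.range Mᵀ) := by
      rw [Submodule.map_span]
      apply Submodule.span_mono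
      rintro v ⟨_, ⟨i', rfl⟩, rfl⟩
      exact ⟨i', (hφM i').symm⟩
    exact hmap ⟨A j, this, rfl⟩
  have hcolspan : Submodule.span F (Set.range Bᵀ) = Submodule.span F (Set.range Mᵀ) := by
    apply le_antisymm
    · rw [Submodule.span_le]
      rintro v ⟨j, rfl⟩
      exact hcolB_mem j
    · apply Submodule.span_mono
      rintro v ⟨i', rfl⟩
      refine ⟨(i' : Fin n), ?_⟩
      funext i
      simp [hB, hM, Matrix.transpose_apply, Matrix.submatrix_apply]
  -- rank of B is |X|
  have hrankB : B.rank = Fintype.card X := by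
    have : LinearIndependent F (fun i : X => B i) := by
      convert hindep using 1
      rfl
    exact this.rank_matrix
  -- columns of M are linearly independent
  have hMcols : LinearIndependent F (fun i : X => Mᵀ i) := by
    rw [linearIndependent_iff_card_eq_finrank_span]
    have : Module.finrank F (Submodule.span F (Set.range Mᵀ)) = Fintype.card X := by
      rw [← hcolspan]
      exact (B.rank_eq_finrank_span_cols).symm.trans hrankB
    rw [Set.finrank, this]
  have hunit : IsUnit M := Matrix.linearIndependent_cols_iff_isUnit.mp hMcols
  have := (Matrix.isUnit_iff_isUnit_det M).mp hunit
  exact this.ne_zero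
end

section
/- (Harvey's update lemma, determinant part) Let F be a field, let M be a nonsingular n×n matrix over F, and let S, T be subsets of the index set [n]. Let M̃ be an n×n matrix over F that agrees with M on every entry (i, j) with i ∉ S or j ∉ T, and set Δ = M̃[S, T] − M[S, T]. Then det(M̃) = det(M) · det(I + Δ · M⁻¹[T, S]), where I is the S×S identity matrix. In particular, M̃ is nonsingular if and only if I + Δ · M⁻¹[T, S] is nonsingular. -/
open Matrix

/-- Harvey's update lemma, determinant part: if `Mt` agrees with the nonsingular matrix `M`
outside of the rows `S` and columns `T`, and `Δ = Mt[S,T] - M[S,T]`, then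
`det Mt = det M * det (1 + Δ · M⁻¹[T,S])`; in particular `Mt` is nonsingular iff
`1 + Δ · M⁻¹[T,S]` is. -/
theorem harvey_update_det {F : Type*} [Field F] {n : ℕ}
    (M Mt : Matrix (Fin n) (Fin n) F) (hM : M.det ≠ 0)
    (S T : Finset (Fin n))
    (hagree : ∀ i j, i ∉ S ∨ j ∉ T → Mt i j = M i j) :
    Mt.det = M.det *
      (1 + (Matrix.of fun (i : S) (j : T) => Mt i j - M i j) *
        M⁻¹.submatrix (fun i : T => (i : Fin n)) (fun j : S => (j : Fin n))).det ∧
    (Mt.det ≠ 0 ↔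
      (1 + (Matrix.of fun (i : S) (j : T) => Mt i j - M i j) *
        M⁻¹.submatrix (fun i : T => (i : Fin n)) (fun j : S => (j : Fin n))).det ≠ 0) := by
  have hMu : IsUnit M.det := isUnit_iff_ne_zero.mpr hM
  set A : Matrix (Fin n) S F := Matrix.of fun i s => if i = (s : Fin n) then (1 : F) else 0
  set B : Matrix S (Fin n) F := Matrix.of fun s j => Mt (s : Fin n) j - M (s : Fin n) j
  have hE : Mt = M + A * B := by
    ext i j
    by_cases hi : i ∈ S
    · have : (A * B) i j = B ⟨i, hi⟩ j := by
        rw [Matrix.mul_apply]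
        rw [Fintype.sum_eq_single (⟨i, hi⟩ : S)]
        · simp [A]
        · intro s hs
          have : i ≠ (s : Fin n) := fun h => hs (Subtype.ext h.symm)
          simp [A, this]
      simp only [Matrix.add_apply, this]
      simp [B]
    · have : (A * B) i j = 0 := by
        rw [Matrix.mul_apply]
        apply Finset.sum_eq_zero
        intro s _
        have : i ≠ (s : Fin n) := fun h => hi (h ▸ s.2)
        simp [A, this]
      simp only [Matrix.add_apply, this, add_zero]
      exact hagree i j (Or.inl hi)
  have hMA : (M⁻¹ * A) = fun j (s : S) => M⁻¹ j (s : Fin n) := by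
    ext j s
    rw [Matrix.mul_apply]
    rw [Finset.sum_eq_single (s : Fin n)]
    · simp [A]
    · intro k _ hk; simp [A, hk]
    · simp
  have hBMA : B * (M⁻¹ * A) =
      (Matrix.of fun (i : S) (j : T) => Mt i j - M i j) *
        M⁻¹.submatrix (fun i : T => (i : Fin n)) (fun j : S => (j : Fin n)) := by
    ext s s'
    rw [Matrix.mul_apply, Matrix.mul_apply, hMA]
    simp only [Matrix.of_apply, Matrix.submatrix_apply, B]
    rw [Finset.sum_coe_sort T (fun t => (Mt (s : Fin n) t - M (s : Fin n) t) * M⁻¹ t (s' : Fin n))]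
    symm
    apply Finset.sum_subset (Finset.subset_univ T)
    intro j _ hj
    have : Mt (s : Fin n) j = M (s : Fin n) j := hagree _ _ (Or.inr hj)
    simp [this]
  have hdet : Mt.det = M.det *
      (1 + (Matrix.of fun (i : S) (j : T) => Mt i j - M i j) *
        M⁻¹.submatrix (fun i : T => (i : Fin n)) (fun j : S => (j : Fin n))).det := by
    have : Mt = M * (1 + M⁻¹ * A * B) := by
      rw [Matrix.mul_add, Matrix.mul_one, ← Matrix.mul_assoc, ← Matrix.mul_assoc,
        Matrix.mul_nonsing_inv M hMu, Matrix.one_mul, ← hE]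
    conv_lhs => rw [this]
    rw [Matrix.det_mul, Matrix.det_one_add_mul_comm, hBMA]
  refine ⟨hdet, ?_⟩
  rw [hdet]
  simp [hM]
end

section
/- (Harvey's update lemma, inverse part) Let F be a field, let M be a nonsingular n×n matrix over F, and let S, T be subsets of the index set [n]. Let M̃ be an n×n matrix over F that agrees with M on every entry (i, j) with i ∉ S or j ∉ T, and set Δ = M̃[S, T] − M[S, T]. If M̃ is nonsingular, then M̃⁻¹ = M⁻¹ − M⁻¹[·, S] · (I + Δ · M⁻¹[T, S])⁻¹ · Δ · M⁻¹[T, ·], where I is the S×S identity matrix, M⁻¹[·, S] denotes the restriction of M⁻¹ to the columns in S, and M⁻¹[T, ·] the restriction of M⁻¹ to the rows in T. -/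
open Matrix

/-- Harvey's update lemma, inverse part: if `Mt` agrees with the nonsingular matrix `M`
outside of the rows `S` and columns `T`, `Δ = Mt[S,T] - M[S,T]`, and `Mt` is nonsingular,
then `Mt⁻¹ = M⁻¹ - M⁻¹[·,S] (1 + Δ M⁻¹[T,S])⁻¹ Δ M⁻¹[T,·]`. -/
theorem harvey_update_inv {F : Type*} [Field F] {n : ℕ}
    (M Mt : Matrix (Fin n) (Fin n) F) (hM : M.det ≠ 0)
    (S T : Finset (Fin n))
    (hagree : ∀ i j, i ∉ S ∨ j ∉ T → Mt i j = M i j)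
    (hMt : Mt.det ≠ 0) :
    Mt⁻¹ = M⁻¹ -
      M⁻¹.submatrix id (fun j : S => (j : Fin n)) *
        (1 + (Matrix.of fun (i : S) (j : T) => Mt i j - M i j) *
          M⁻¹.submatrix (fun i : T => (i : Fin n)) (fun j : S => (j : Fin n)))⁻¹ *
        (Matrix.of fun (i : S) (j : T) => Mt i j - M i j) *
        M⁻¹.submatrix (fun i : T => (i : Fin n)) id := by
  classical
  set A := M⁻¹ with hA
  set Δ : Matrix S T F := Matrix.of fun (i : S) (j : T) => Mt i j - M i j with hΔ
  set U : Matrix (Fin n) S F :=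
    (1 : Matrix (Fin n) (Fin n) F).submatrix id (fun j : S => (j : Fin n)) with hUdef
  set V : Matrix T (Fin n) F :=
    (1 : Matrix (Fin n) (Fin n) F).submatrix (fun i : T => (i : Fin n)) id with hVdef
  have h1 : M * A = 1 := M.mul_nonsing_inv (Ne.isUnit hM)
  -- multiplication by selectors is submatrix
  have hBU : ∀ {m : Type} [Fintype m] (B : Matrix m (Fin n) F),
      B * U = B.submatrix id (fun j : S => (j : Fin n)) := by
    intro m _ B
    ext i s
    simp [hUdef, Matrix.mul_apply, Matrix.one_apply]
  have hVB : ∀ B : Matrix (Fin n) (Fin n) F,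
      V * B = B.submatrix (fun i : T => (i : Fin n)) id := by
    intro B
    ext t j
    simp [hVdef, Matrix.mul_apply, Matrix.one_apply]
  -- decomposition of Mt
  have hMt' : Mt = M + U * Δ * V := by
    ext i j
    have hUΔ : ∀ t : T, (U * Δ) i t = if h : i ∈ S then Δ ⟨i, h⟩ t else 0 := by
      intro t
      simp only [Matrix.mul_apply, hUdef, Matrix.submatrix_apply, id_eq, Matrix.one_apply]
      by_cases h : i ∈ S
      · rw [dif_pos h, Finset.sum_eq_single (⟨i, h⟩ : S)]
        · simp
        · intro b _ hb
          rw [if_neg, zero_mul]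
          intro hib
          exact hb (Subtype.ext hib.symm)
        · simp
      · rw [dif_neg h, Finset.sum_eq_zero]
        intro b _
        rw [if_neg, zero_mul]
        intro hib
        exact h (hib ▸ b.2)
    have hUΔV : (U * Δ * V) i j =
        if h : i ∈ S then (if h' : j ∈ T then Δ ⟨i, h⟩ ⟨j, h'⟩ else 0) else 0 := by
      rw [Matrix.mul_apply]
      by_cases h : i ∈ S
      · rw [dif_pos h]
        by_cases h' : j ∈ T
        · rw [dif_pos h', Finset.sum_eq_single (⟨j, h'⟩ : T)]
          · simp [hUΔ, h, hVdef, Matrix.one_apply]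
          · intro b _ hb
            simp only [hVdef, Matrix.submatrix_apply, id_eq, Matrix.one_apply]
            rw [if_neg, mul_zero]
            intro hbj
            exact hb (Subtype.ext hbj)
          · simp
        · rw [dif_neg h', Finset.sum_eq_zero]
          intro b _
          simp only [hVdef, Matrix.submatrix_apply, id_eq, Matrix.one_apply]
          rw [if_neg, mul_zero]
          intro hbj
          exact h' (hbj ▸ b.2)
      · rw [dif_neg h, Finset.sum_eq_zero]
        intro b _
        rw [hUΔ b, dif_neg h, zero_mul]
    rw [Matrix.add_apply, hUΔV]
    by_cases h : i ∈ S
    · by_cases h' : j ∈ T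
      · simp [h, h', hΔ]
      · rw [dif_pos h, dif_neg h', add_zero, hagree i j (Or.inr h')]
    · rw [dif_neg h, add_zero, hagree i j (Or.inl h)]
  -- notation
  set P : Matrix (Fin n) S F := A * U with hP
  set Q : Matrix T (Fin n) F := V * A with hQ
  set K : Matrix S S F := 1 + Δ * (Q * U) with hK
  -- K is nonsingular
  have hdetK : K.det ≠ 0 := by
    have hMtfac : Mt = M * (1 + A * (U * Δ * V)) := by
      rw [Matrix.mul_add, Matrix.mul_one, ← Matrix.mul_assoc, h1, Matrix.one_mul, hMt']
    have hdet : Mt.det = M.det * K.det := by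
      rw [hMtfac, det_mul]
      congr 1
      have e1 : A * (U * Δ * V) = (A * U * Δ) * V := by
        simp only [Matrix.mul_assoc]
      rw [e1, Matrix.det_one_add_mul_comm]
      have e2 : V * (A * U * Δ) = (Q * U) * Δ := by
        rw [hQ]; simp only [Matrix.mul_assoc]
      rw [e2, Matrix.det_one_add_mul_comm, ← hK]
    intro h0
    rw [hdet, h0, mul_zero] at hMt
    exact hMt rfl
  have h2 : K * K⁻¹ = 1 := K.mul_nonsing_inv (Ne.isUnit hdetK)
  -- the claimed inverse
  have hMP : M * P = U := by rw [hP, ← Matrix.mul_assoc, h1, Matrix.one_mul]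
  have hVP : V * P = Q * U := by rw [hP, hQ, Matrix.mul_assoc]
  have key : Mt * (A - P * K⁻¹ * (Δ * Q)) = 1 := by
    rw [hMt']
    have expand : (M + U * Δ * V) * (A - P * K⁻¹ * (Δ * Q)) =
        (M * A - M * P * (K⁻¹ * (Δ * Q))) +
          (U * (Δ * (V * A)) - U * (Δ * ((V * P) * (K⁻¹ * (Δ * Q))))) := by
      rw [Matrix.add_mul, Matrix.mul_sub, Matrix.mul_sub]
      congr 2 <;> simp only [Matrix.mul_assoc]
    rw [expand, h1, hMP, hVP, ← hQ]
    have combine : U * (K⁻¹ * (Δ * Q)) + U * (Δ * ((Q * U) * (K⁻¹ * (Δ * Q)))) =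
        U * (Δ * Q) := by
      rw [← Matrix.mul_add]
      congr 1
      have : K⁻¹ * (Δ * Q) + Δ * ((Q * U) * (K⁻¹ * (Δ * Q))) =
          (1 + Δ * (Q * U)) * (K⁻¹ * (Δ * Q)) := by
        rw [Matrix.add_mul, Matrix.one_mul]
        congr 1
        simp only [Matrix.mul_assoc]
      rw [this, ← hK, ← Matrix.mul_assoc, h2, Matrix.one_mul]
    calc 1 - U * (K⁻¹ * (Δ * Q)) + (U * (Δ * Q) - U * (Δ * ((Q * U) * (K⁻¹ * (Δ * Q))))) =
          1 + U * (Δ * Q) -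
            (U * (K⁻¹ * (Δ * Q)) + U * (Δ * ((Q * U) * (K⁻¹ * (Δ * Q))))) := by abel
      _ = 1 := by rw [combine]; abel
  have hPQ : P = A.submatrix id (fun j : S => (j : Fin n)) := by rw [hP, hBU A]
  have hQA : Q = A.submatrix (fun i : T => (i : Fin n)) id := by rw [hQ, hVB A]
  have hQU : Q * U = A.submatrix (fun i : T => (i : Fin n)) (fun j : S => (j : Fin n)) := by
    rw [hQA, hBU]
    simp [Matrix.submatrix_submatrix, Function.comp]
  have := Matrix.inv_eq_right_inv key
  rw [this, hK, hQU, hPQ, hQA]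
  simp only [Matrix.mul_assoc, hA]
end

section
/- Let F be a field, let M be an m×m matrix over F, and let X be a subset of the index set such that the principal submatrix M[X, X] is nonsingular and the rank of M equals |X|. Then the Schur complement of M[X, X] in M vanishes: M[X̄, X̄] = M[X̄, X] · M[X, X]⁻¹ · M[X, X̄], where X̄ denotes the complement of X in the index set. -/
open Matrix

/-- Taking an arbitrary submatrix does not increase the rank. -/
lemma rank_submatrix_le' {R : Type*} [CommRing R] [StrongRankCondition R] {m n p q : Type*}
    [Fintype m] [Fintype n] [Fintype p] [Fintype q] [DecidableEq m] [DecidableEq n]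
    (A : Matrix m n R) (f : p → m) (g : q → n) :
    (A.submatrix f g).rank ≤ A.rank := by
  have hP : A.submatrix f g =
      (Matrix.of fun i k => if k = f i then (1 : R) else 0 : Matrix p m R) * A *
        (Matrix.of fun k j => if k = g j then (1 : R) else 0 : Matrix n q R) := by
    ext i j
    simp [Matrix.mul_apply, Finset.sum_ite_eq, Finset.sum_ite_eq']
  rw [hP]
  exact le_trans (Matrix.rank_mul_le_left _ _) (Matrix.rank_mul_le_right _ _)

/-- If `M[X,X]` is nonsingular and `rank M = |X|`, then the Schur complement of `M[X,X]`
in `M` vanishes: `M[X̄,X̄] = M[X̄,X] M[X,X]⁻¹ M[X,X̄]`. -/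
theorem schur_complement_vanishes {F : Type*} [Field F] {m : ℕ}
    (M : Matrix (Fin m) (Fin m) F) (X : Finset (Fin m))
    (hX : (M.submatrix (fun i : X => (i : Fin m)) (fun j : X => (j : Fin m))).det ≠ 0)
    (hrank : M.rank = X.card) :
    M.submatrix (fun i : (Xᶜ : Finset (Fin m)) => (i : Fin m))
        (fun j : (Xᶜ : Finset (Fin m)) => (j : Fin m)) =
      M.submatrix (fun i : (Xᶜ : Finset (Fin m)) => (i : Fin m)) (fun j : X => (j : Fin m)) *
        (M.submatrix (fun i : X => (i : Fin m)) (fun j : X => (j : Fin m)))⁻¹ *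
        M.submatrix (fun i : X => (i : Fin m)) (fun j : (Xᶜ : Finset (Fin m)) => (j : Fin m)) := by
  set A := M.submatrix (fun i : X => (i : Fin m)) (fun j : X => (j : Fin m)) with hA
  haveI : Invertible A := A.invertibleOfIsUnitDet hX.isUnit
  ext i j
  -- the (|X|+1) × (|X|+1) submatrix obtained by adjoining row i and column j
  set N : Matrix (X ⊕ Unit) (X ⊕ Unit) F :=
    M.submatrix (Sum.elim (fun k : X => (k : Fin m)) (fun _ => (i : Fin m)))
      (Sum.elim (fun k : X => (k : Fin m)) (fun _ => (j : Fin m))) with hN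
  -- N as a block matrix
  have hblock : N = Matrix.fromBlocks A
      (M.submatrix (fun k : X => (k : Fin m)) (fun _ : Unit => (j : Fin m)))
      (M.submatrix (fun _ : Unit => (i : Fin m)) (fun k : X => (k : Fin m)))
      (M.submatrix (fun _ : Unit => (i : Fin m)) (fun _ : Unit => (j : Fin m))) := by
    ext a b
    cases a <;> cases b <;> rfl
  -- N has too small rank to be invertible
  have hdet : N.det = 0 := by
    by_contra hdet
    have h1 : N.rank = Fintype.card (X ⊕ Unit) := N.rank_of_isUnit (Matrix.isUnit_iff_isUnit_det N |>.mpr (Ne.isUnit hdet))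
    have h2 : N.rank ≤ M.rank := rank_submatrix_le' M _ _
    rw [h1, hrank, Fintype.card_sum, Fintype.card_coe, Fintype.card_unit] at h2
    omega
  rw [hblock, Matrix.det_fromBlocks₁₁] at hdet
  have hdet2 : (M.submatrix (fun _ : Unit => (i : Fin m)) (fun _ : Unit => (j : Fin m)) -
      M.submatrix (fun _ : Unit => (i : Fin m)) (fun k : X => (k : Fin m)) * ⅟A *
      M.submatrix (fun k : X => (k : Fin m)) (fun _ : Unit => (j : Fin m))).det = 0 := by
    rcases mul_eq_zero.mp hdet with h | h
    · exact absurd h hX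
    · exact h
  rw [Matrix.det_unique] at hdet2
  have := sub_eq_zero.mp hdet2
  simp only [Matrix.sub_apply, Matrix.mul_apply, Matrix.submatrix_apply] at this ⊢
  rw [Matrix.invOf_eq_nonsing_inv] at this
  simpa [Matrix.mul_apply] using this
end

section
/- Let G be a finite simple graph, and let S and T be disjoint sets of vertices such that every neighbor of a vertex of T lies in T ∪ S. Then for every u ∈ T and every v ∈ S, the extended distance satisfies edist_G(u, v) = inf over s ∈ S of ( edist_{G[S ∪ T]}(u, s) + edist_G(s, v) ), where G[S ∪ T] denotes the subgraph of G induced on S ∪ T and the extended distance edist takes values in ℕ ∪ {∞}, being ∞ when the two vertices are not connected. -/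
open SimpleGraph

lemma edist_induce_le_aux {V : Type*} (G : SimpleGraph V) (A : Set V) (a b : A) :
    G.edist ↑a ↑b ≤ (G.induce A).edist a b := by
  rcases eq_or_ne ((G.induce A).edist a b) ⊤ with h | h
  · simp [h]
  · obtain ⟨p, hp⟩ := exists_walk_of_edist_ne_top h
    calc G.edist ↑a ↑b ≤ ((p.map (Embedding.induce A).toHom).length : ℕ∞) := edist_le _
      _ = (p.length : ℕ∞) := by rw [Walk.length_map]
      _ = (G.induce A).edist a b := hp

lemma walk_split_aux {V : Type*} (G : SimpleGraph V) (S T : Set V)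
    (hT : ∀ v ∈ T, ∀ w, G.Adj v w → w ∈ T ∪ S) :
    ∀ {u v : V} (p : G.Walk u v) (hu : u ∈ T) (hv : v ∈ S),
    ∃ (s : V) (hs : s ∈ S)
      (q : (G.induce (S ∪ T)).Walk ⟨u, Or.inr hu⟩ ⟨s, Or.inl hs⟩) (r : G.Walk s v),
      q.length + r.length ≤ p.length := by
  intro u v p
  induction p with
  | nil =>
    intro hu hv
    exact ⟨_, hv, Walk.nil, Walk.nil, le_refl 0⟩
  | @cons a w b h p' ih =>
    intro hu hv
    have hadj : (G.induce (S ∪ T)).Adj ⟨a, Or.inr hu⟩ ⟨w, (hT a hu w h).elim Or.inr Or.inl⟩ := h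
    rcases hT a hu w h with hwT | hwS
    · obtain ⟨s, hs, q, r, hle⟩ := ih hwT hv
      refine ⟨s, hs, Walk.cons hadj q, r, ?_⟩
      simp only [Walk.length_cons]
      omega
    · refine ⟨w, hwS, Walk.cons hadj Walk.nil, p', ?_⟩
      simp only [Walk.length_cons, Walk.length_nil]
      omega

/-- If `T` is a union of connected components of `G - S` (every neighbor of a vertex of `T`
lies in `T ∪ S`), then for `u ∈ T` and `v ∈ S`, the distance from `u` to `v` in `G` is the
infimum over `s ∈ S` of the distance from `u` to `s` in `G[S ∪ T]` plus the distance from `s`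
to `v` in `G`. -/
theorem edist_T_to_S {V : Type*} (G : SimpleGraph V) (S T : Set V)
    (hdisj : Disjoint S T)
    (hT : ∀ v ∈ T, ∀ w, G.Adj v w → w ∈ T ∪ S)
    (u v : V) (hu : u ∈ T) (hv : v ∈ S) :
    G.edist u v =
      ⨅ s : S, ((G.induce (S ∪ T)).edist ⟨u, Set.mem_union_right S hu⟩
          ⟨(s : V), Set.mem_union_left T s.2⟩ + G.edist s v) := by
  apply le_antisymm
  · refine le_iInf fun s => ?_
    calc G.edist u v ≤ G.edist u s + G.edist s v := SimpleGraph.edist_triangle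
      _ ≤ (G.induce (S ∪ T)).edist ⟨u, Set.mem_union_right S hu⟩
            ⟨(s : V), Set.mem_union_left T s.2⟩ + G.edist s v := by
        gcongr
        exact edist_induce_le_aux G (S ∪ T) _ _
  · rcases eq_or_ne (G.edist u v) ⊤ with h | h
    · simp [h]
    · obtain ⟨p, hp⟩ := exists_walk_of_edist_ne_top h
      obtain ⟨s, hs, q, r, hle⟩ := walk_split_aux G S T hT p hu hv
      calc (⨅ s : S, ((G.induce (S ∪ T)).edist ⟨u, Set.mem_union_right S hu⟩
              ⟨(s : V), Set.mem_union_left T s.2⟩ + G.edist s v))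
          ≤ (G.induce (S ∪ T)).edist ⟨u, Set.mem_union_right S hu⟩ ⟨s, Or.inl hs⟩
              + G.edist s v := iInf_le _ (⟨s, hs⟩ : S)
        _ ≤ (q.length : ℕ∞) + (r.length : ℕ∞) := by
            gcongr
            · exact edist_le _
            · exact edist_le _
        _ ≤ (p.length : ℕ∞) := by exact_mod_cast hle
        _ = G.edist u v := hp
end

section
/- Let G be a finite simple graph, and let S, T, T' be pairwise disjoint sets of vertices such that every neighbor of a vertex of T lies in T ∪ S and every neighbor of a vertex of T' lies in T' ∪ S. Then for every u ∈ T and every v ∈ T', the extended distance satisfies edist_G(u, v) = inf over pairs s, s' ∈ S of ( edist_{G[S ∪ T]}(u, s) + edist_G(s, s') + edist_{G[S ∪ T']}(s', v) ). -/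
open SimpleGraph

private lemma edist_induce_ge {V : Type*} (G : SimpleGraph V) (A : Set V) (x y : A) :
    G.edist x.1 y.1 ≤ (G.induce A).edist x y := by
  rcases eq_or_ne ((G.induce A).edist x y) ⊤ with h | h
  · simp [h]
  · obtain ⟨p, hp⟩ := exists_walk_of_edist_ne_top h
    let f : G.induce A →g G := ⟨Subtype.val, fun h => h⟩
    calc G.edist x.1 y.1 ≤ (p.map f).length := edist_le _
    _ = p.length := by rw [Walk.length_map]
    _ = (G.induce A).edist x y := hp

private lemma lemB {V : Type*} (G : SimpleGraph V) (S T' : Set V)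
    (hST' : Disjoint S T')
    (hT' : ∀ v ∈ T', ∀ w, G.Adj v w → w ∈ T' ∪ S)
    {v w : V} (hw : w ∈ S) (q : G.Walk v w) :
    ∀ hv : v ∈ T', ∃ s' : S,
      (G.induce (S ∪ T')).edist ⟨v, Set.mem_union_right S hv⟩
        ⟨s'.1, Set.mem_union_left T' s'.2⟩ + G.edist s'.1 w ≤ q.length := by
  induction q with
  | nil => exact fun hv => absurd hw (fun h => hST'.ne_of_mem h hv rfl)
  | @cons v x w hadj q' ih =>
    intro hv
    rcases hT' v hv x hadj with hx | hx
    · obtain ⟨s', hs'⟩ := ih hw hx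
      refine ⟨s', ?_⟩
      have h1 : (G.induce (S ∪ T')).edist ⟨v, Set.mem_union_right S hv⟩
          ⟨s'.1, Set.mem_union_left T' s'.2⟩ ≤ 1 +
          (G.induce (S ∪ T')).edist ⟨x, Set.mem_union_right S hx⟩
          ⟨s'.1, Set.mem_union_left T' s'.2⟩ := by
        have hadj' : (G.induce (S ∪ T')).Adj ⟨v, Set.mem_union_right S hv⟩
            ⟨x, Set.mem_union_right S hx⟩ := hadj
        calc _ ≤ (G.induce (S ∪ T')).edist ⟨v, Set.mem_union_right S hv⟩
              ⟨x, Set.mem_union_right S hx⟩ + _ := SimpleGraph.edist_triangle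
        _ ≤ 1 + _ := by
            gcongr
            exact (edist_eq_one_iff_adj.mpr hadj').le
      calc _ ≤ (1 + (G.induce (S ∪ T')).edist ⟨x, Set.mem_union_right S hx⟩
            ⟨s'.1, Set.mem_union_left T' s'.2⟩) + G.edist s'.1 w := by gcongr
      _ ≤ 1 + (q'.length : ℕ∞) := by rw [add_assoc]; gcongr
      _ = ((Walk.cons hadj q').length : ℕ∞) := by
          simp [Walk.length_cons, add_comm]
    · refine ⟨⟨x, hx⟩, ?_⟩
      have hadj' : (G.induce (S ∪ T')).Adj ⟨v, Set.mem_union_right S hv⟩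
          ⟨x, Set.mem_union_left T' hx⟩ := hadj
      calc _ ≤ (1 : ℕ∞) + (q'.length : ℕ∞) := by
            gcongr
            · exact (edist_eq_one_iff_adj.mpr hadj').le
            · exact edist_le q'
      _ = ((Walk.cons hadj q').length : ℕ∞) := by simp [Walk.length_cons, add_comm]

private lemma lemA {V : Type*} (G : SimpleGraph V) (S T T' : Set V)
    (hST : Disjoint S T) (hST' : Disjoint S T') (hTT' : Disjoint T T')
    (hT : ∀ v ∈ T, ∀ w, G.Adj v w → w ∈ T ∪ S)
    (hT' : ∀ v ∈ T', ∀ w, G.Adj v w → w ∈ T' ∪ S)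
    {u v : V} (hv : v ∈ T') (p : G.Walk u v) :
    ∀ hu : u ∈ T, ∃ s s' : S,
      (G.induce (S ∪ T)).edist ⟨u, Set.mem_union_right S hu⟩
          ⟨s.1, Set.mem_union_left T s.2⟩ +
        G.edist s.1 s'.1 +
        (G.induce (S ∪ T')).edist ⟨s'.1, Set.mem_union_left T' s'.2⟩
          ⟨v, Set.mem_union_right S hv⟩ ≤ p.length := by
  induction p with
  | nil => exact fun hu => absurd hv (fun h => hTT'.ne_of_mem hu h rfl)
  | @cons u x v hadj p' ih =>
    intro hu
    rcases hT u hu x hadj with hx | hx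
    · obtain ⟨s, s', hs⟩ := ih hv hx
      refine ⟨s, s', ?_⟩
      have hadj' : (G.induce (S ∪ T)).Adj ⟨u, Set.mem_union_right S hu⟩
          ⟨x, Set.mem_union_right S hx⟩ := hadj
      have h1 : (G.induce (S ∪ T)).edist ⟨u, Set.mem_union_right S hu⟩
          ⟨s.1, Set.mem_union_left T s.2⟩ ≤ 1 +
          (G.induce (S ∪ T)).edist ⟨x, Set.mem_union_right S hx⟩
          ⟨s.1, Set.mem_union_left T s.2⟩ :=
        calc _ ≤ (G.induce (S ∪ T)).edist ⟨u, Set.mem_union_right S hu⟩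
              ⟨x, Set.mem_union_right S hx⟩ + _ := SimpleGraph.edist_triangle
        _ ≤ 1 + _ := by gcongr; exact (edist_eq_one_iff_adj.mpr hadj').le
      calc _ ≤ (1 + (G.induce (S ∪ T)).edist ⟨x, Set.mem_union_right S hx⟩
            ⟨s.1, Set.mem_union_left T s.2⟩) + G.edist s.1 s'.1 +
            (G.induce (S ∪ T')).edist ⟨s'.1, Set.mem_union_left T' s'.2⟩
            ⟨v, Set.mem_union_right S hv⟩ := by gcongr
      _ ≤ 1 + (p'.length : ℕ∞) := by
          rw [add_assoc, add_assoc]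
          gcongr
          rw [← add_assoc]
          exact hs
      _ = ((Walk.cons hadj p').length : ℕ∞) := by simp [Walk.length_cons, add_comm]
    · obtain ⟨s', hs'⟩ := lemB G S T' hST' hT' hx p'.reverse hv
      refine ⟨⟨x, hx⟩, s', ?_⟩
      have hadj' : (G.induce (S ∪ T)).Adj ⟨u, Set.mem_union_right S hu⟩
          ⟨x, Set.mem_union_left T hx⟩ := hadj
      have h2 : G.edist x s'.1 +
          (G.induce (S ∪ T')).edist ⟨s'.1, Set.mem_union_left T' s'.2⟩
          ⟨v, Set.mem_union_right S hv⟩ ≤ (p'.length : ℕ∞) := by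
        rw [G.edist_comm, SimpleGraph.edist_comm (G := G.induce (S ∪ T')), add_comm]
        calc _ ≤ (p'.reverse.length : ℕ∞) := hs'
        _ = (p'.length : ℕ∞) := by rw [Walk.length_reverse]
      calc _ ≤ (1 : ℕ∞) + ((p'.length : ℕ∞)) := by
            rw [add_assoc]
            gcongr
            exact (edist_eq_one_iff_adj.mpr hadj').le
      _ = ((Walk.cons hadj p').length : ℕ∞) := by simp [Walk.length_cons, add_comm]



/-- If `T` and `T'` are unions of connected components of `G - S`, then for `u ∈ T` and
`v ∈ T'`, the distance from `u` to `v` in `G` is the infimum over `s, s' ∈ S` of the distance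
from `u` to `s` in `G[S ∪ T]`, plus the distance from `s` to `s'` in `G`, plus the distance
from `s'` to `v` in `G[S ∪ T']`. -/
theorem edist_T_to_T' {V : Type*} (G : SimpleGraph V) (S T T' : Set V)
    (hST : Disjoint S T) (hST' : Disjoint S T') (hTT' : Disjoint T T')
    (hT : ∀ v ∈ T, ∀ w, G.Adj v w → w ∈ T ∪ S)
    (hT' : ∀ v ∈ T', ∀ w, G.Adj v w → w ∈ T' ∪ S)
    (u v : V) (hu : u ∈ T) (hv : v ∈ T') :
    G.edist u v =
      ⨅ s : S, ⨅ s' : S,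
        ((G.induce (S ∪ T)).edist ⟨u, Set.mem_union_right S hu⟩
            ⟨(s : V), Set.mem_union_left T s.2⟩ +
          G.edist s s' +
          (G.induce (S ∪ T')).edist ⟨(s' : V), Set.mem_union_left T' s'.2⟩
            ⟨v, Set.mem_union_right S hv⟩) := by
  apply le_antisymm
  · refine le_iInf fun s => le_iInf fun s' => ?_
    calc G.edist u v ≤ G.edist u s.1 + G.edist s.1 v := SimpleGraph.edist_triangle
    _ ≤ G.edist u s.1 + (G.edist s.1 s'.1 + G.edist s'.1 v) := by
        gcongr; exact SimpleGraph.edist_triangle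
    _ = G.edist u s.1 + G.edist s.1 s'.1 + G.edist s'.1 v := by rw [add_assoc]
    _ ≤ _ := by
        gcongr
        · exact edist_induce_ge G (S ∪ T) ⟨u, Set.mem_union_right S hu⟩
            ⟨s.1, Set.mem_union_left T s.2⟩
        · exact edist_induce_ge G (S ∪ T') ⟨s'.1, Set.mem_union_left T' s'.2⟩
            ⟨v, Set.mem_union_right S hv⟩
  · rcases eq_or_ne (G.edist u v) ⊤ with h | h
    · simp [h]
    · obtain ⟨p, hp⟩ := exists_walk_of_edist_ne_top h
      obtain ⟨s, s', hs⟩ := lemA G S T T' hST hST' hTT' hT hT' hv p hu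
      calc _ ≤ _ := iInf₂_le s s'
      _ ≤ (p.length : ℕ∞) := hs
      _ = G.edist u v := hp
end

section
/- Let G be a finite simple graph, and let S and T be disjoint sets of vertices such that every neighbor of a vertex of T lies in T ∪ S. Then for all u, v ∈ T, the extended distance satisfies edist_G(u, v) = min( edist_{G[S ∪ T]}(u, v) , inf over pairs s, s' ∈ S of ( edist_{G[S ∪ T]}(u, s) + edist_G(s, s') + edist_{G[S ∪ T]}(s', v) ) ). -/
open SimpleGraph

/-- Distance in an induced subgraph dominates distance in the ambient graph. -/
lemma edist_le_edist_induce {V : Type*} (G : SimpleGraph V) (s : Set V) (x y : s) :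
    G.edist x y ≤ (G.induce s).edist x y := by
  rcases eq_or_ne ((G.induce s).edist x y) ⊤ with h | h
  · simp [h]
  · obtain ⟨p, hp⟩ := exists_walk_of_edist_ne_top h
    calc G.edist x y ≤ ((p.map (Embedding.induce s).toHom).length : ℕ∞) := edist_le _
      _ = (p.length : ℕ∞) := by rw [Walk.length_map]
      _ = _ := hp

lemma edist_key {V : Type*} (G : SimpleGraph V) (S T : Set V)
    (hT : ∀ v ∈ T, ∀ w, G.Adj v w → w ∈ T ∪ S) :
    ∀ n : ℕ, ∀ (a b : V) (hb : b ∈ S ∪ T) (q : G.Walk a b), q.length = n →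
      ((∀ ha : a ∈ S ∪ T,
        (G.induce (S ∪ T)).edist ⟨a, ha⟩ ⟨b, hb⟩ ≤ (q.length : ℕ∞) ∨
        ∃ s s' : S,
          (G.induce (S ∪ T)).edist ⟨a, ha⟩ ⟨(s : V), Set.mem_union_left T s.2⟩ +
            G.edist s s' +
            (G.induce (S ∪ T)).edist ⟨(s' : V), Set.mem_union_left T s'.2⟩ ⟨b, hb⟩ ≤
            (q.length : ℕ∞)) ∧
      (a ∉ S ∪ T → ∃ s' : S,
        G.edist a s' +
          (G.induce (S ∪ T)).edist ⟨(s' : V), Set.mem_union_left T s'.2⟩ ⟨b, hb⟩ ≤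
          (q.length : ℕ∞))) := by
  intro n
  induction n using Nat.strong_induction_on with
  | _ n IH =>
    intro a b hb q hq
    cases q with
    | nil =>
      constructor
      · intro ha
        left
        exact le_trans (le_of_eq (SimpleGraph.edist_eq_zero_iff.mpr rfl)) zero_le
      · intro ha; exact absurd hb ha
    | @cons a c b h q' =>
      have hlt : q'.length < n := by
        simp only [Walk.length_cons] at hq; omega
      have IH' := IH q'.length hlt c b hb q' rfl
      have hlen : (((Walk.cons h q').length : ℕ) : ℕ∞) = 1 + (q'.length : ℕ∞) := by
        rw [Walk.length_cons]; push_cast; ring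
      constructor
      · intro ha
        by_cases hc : c ∈ S ∪ T
        · have hadj : (G.induce (S ∪ T)).Adj ⟨a, ha⟩ ⟨c, hc⟩ := h
          have h1 : (G.induce (S ∪ T)).edist ⟨a, ha⟩ ⟨c, hc⟩ ≤ 1 :=
            (edist_eq_one_iff_adj.mpr hadj).le
          rcases IH'.1 hc with h2 | ⟨s, s', h2⟩
          · left
            calc (G.induce (S ∪ T)).edist ⟨a, ha⟩ ⟨b, hb⟩ ≤
                  (G.induce (S ∪ T)).edist ⟨a, ha⟩ ⟨c, hc⟩ +
                    (G.induce (S ∪ T)).edist ⟨c, hc⟩ ⟨b, hb⟩ := SimpleGraph.edist_triangle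
              _ ≤ 1 + (q'.length : ℕ∞) := add_le_add h1 h2
              _ = _ := hlen.symm
          · right
            refine ⟨s, s', ?_⟩
            have h3 : (G.induce (S ∪ T)).edist ⟨a, ha⟩ ⟨(s : V), Set.mem_union_left T s.2⟩ ≤
                1 + (G.induce (S ∪ T)).edist ⟨c, hc⟩ ⟨(s : V), Set.mem_union_left T s.2⟩ :=
              le_trans SimpleGraph.edist_triangle (add_le_add h1 le_rfl)
            calc _ ≤ (1 + (G.induce (S ∪ T)).edist ⟨c, hc⟩ ⟨(s : V), Set.mem_union_left T s.2⟩)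
                  + G.edist s s' +
                  (G.induce (S ∪ T)).edist ⟨(s' : V), Set.mem_union_left T s'.2⟩ ⟨b, hb⟩ :=
                add_le_add (add_le_add h3 le_rfl) le_rfl
              _ = 1 + ((G.induce (S ∪ T)).edist ⟨c, hc⟩ ⟨(s : V), Set.mem_union_left T s.2⟩
                  + G.edist s s' +
                  (G.induce (S ∪ T)).edist ⟨(s' : V), Set.mem_union_left T s'.2⟩ ⟨b, hb⟩) := by
                ring
              _ ≤ 1 + (q'.length : ℕ∞) := add_le_add le_rfl h2
              _ = _ := hlen.symm
        · -- c leaves S ∪ T, so a must be in S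
          have haS : a ∈ S := by
            rcases ha with ha | ha
            · exact ha
            · exact absurd (Set.union_comm T S ▸ hT a ha c h) hc
          obtain ⟨s', hle⟩ := IH'.2 hc
          right
          refine ⟨⟨a, haS⟩, s', ?_⟩
          have h0 : (G.induce (S ∪ T)).edist ⟨a, ha⟩ ⟨a, Set.mem_union_left T haS⟩ = 0 := by
            exact edist_eq_zero_iff.mpr rfl
          have h1 : G.edist a c ≤ 1 := (edist_eq_one_iff_adj.mpr h).le
          have h2 : G.edist a s' ≤ 1 + G.edist c s' :=
            le_trans SimpleGraph.edist_triangle (add_le_add h1 le_rfl)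
          calc (G.induce (S ∪ T)).edist ⟨a, ha⟩ ⟨a, Set.mem_union_left T haS⟩ +
                G.edist (⟨a, haS⟩ : S) s' +
                (G.induce (S ∪ T)).edist ⟨(s' : V), Set.mem_union_left T s'.2⟩ ⟨b, hb⟩
              = G.edist a s' +
                (G.induce (S ∪ T)).edist ⟨(s' : V), Set.mem_union_left T s'.2⟩ ⟨b, hb⟩ := by
                rw [h0, zero_add]
            _ ≤ (1 + G.edist c s') +
                (G.induce (S ∪ T)).edist ⟨(s' : V), Set.mem_union_left T s'.2⟩ ⟨b, hb⟩ :=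
                add_le_add h2 le_rfl
            _ = 1 + (G.edist c s' +
                (G.induce (S ∪ T)).edist ⟨(s' : V), Set.mem_union_left T s'.2⟩ ⟨b, hb⟩) := by
                ring
            _ ≤ 1 + (q'.length : ℕ∞) := add_le_add le_rfl hle
            _ = _ := hlen.symm
      · intro ha
        by_cases hc : c ∈ S ∪ T
        · have hcS : c ∈ S := by
            rcases hc with hc' | hc'
            · exact hc'
            · exact absurd (Set.union_comm T S ▸ hT c hc' a h.symm) ha
          have h1 : G.edist a c ≤ 1 := (edist_eq_one_iff_adj.mpr h).le
          rcases IH'.1 hc with h2 | ⟨s, s'', h2⟩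
          · refine ⟨⟨c, hcS⟩, ?_⟩
            calc G.edist a c +
                  (G.induce (S ∪ T)).edist ⟨c, Set.mem_union_left T hcS⟩ ⟨b, hb⟩
                ≤ 1 + (q'.length : ℕ∞) := add_le_add h1 h2
              _ = _ := hlen.symm
          · refine ⟨s'', ?_⟩
            have h3 : G.edist a s'' ≤ 1 +
                ((G.induce (S ∪ T)).edist ⟨c, hc⟩ ⟨(s : V), Set.mem_union_left T s.2⟩
                  + G.edist s s'') := by
              calc G.edist a s'' ≤ G.edist a c + G.edist c s'' := SimpleGraph.edist_triangle
                _ ≤ G.edist a c + (G.edist c s + G.edist s s'') :=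
                    add_le_add le_rfl SimpleGraph.edist_triangle
                _ ≤ 1 + ((G.induce (S ∪ T)).edist ⟨c, hc⟩ ⟨(s : V), Set.mem_union_left T s.2⟩
                    + G.edist s s'') :=
                    add_le_add h1 (add_le_add (edist_le_edist_induce G _ _ _) le_rfl)
            calc G.edist a s'' +
                  (G.induce (S ∪ T)).edist ⟨(s'' : V), Set.mem_union_left T s''.2⟩ ⟨b, hb⟩
                ≤ (1 + ((G.induce (S ∪ T)).edist ⟨c, hc⟩ ⟨(s : V), Set.mem_union_left T s.2⟩
                    + G.edist s s'')) +
                  (G.induce (S ∪ T)).edist ⟨(s'' : V), Set.mem_union_left T s''.2⟩ ⟨b, hb⟩ :=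
                  add_le_add h3 le_rfl
              _ = 1 + ((G.induce (S ∪ T)).edist ⟨c, hc⟩ ⟨(s : V), Set.mem_union_left T s.2⟩
                    + G.edist s s'' +
                  (G.induce (S ∪ T)).edist ⟨(s'' : V), Set.mem_union_left T s''.2⟩ ⟨b, hb⟩) := by
                  ring
              _ ≤ 1 + (q'.length : ℕ∞) := add_le_add le_rfl h2
              _ = _ := hlen.symm
        · obtain ⟨s', hle⟩ := IH'.2 hc
          refine ⟨s', ?_⟩
          have h1 : G.edist a c ≤ 1 := (edist_eq_one_iff_adj.mpr h).le
          have h2 : G.edist a s' ≤ 1 + G.edist c s' :=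
            le_trans SimpleGraph.edist_triangle (add_le_add h1 le_rfl)
          calc G.edist a s' +
                (G.induce (S ∪ T)).edist ⟨(s' : V), Set.mem_union_left T s'.2⟩ ⟨b, hb⟩
              ≤ (1 + G.edist c s') +
                (G.induce (S ∪ T)).edist ⟨(s' : V), Set.mem_union_left T s'.2⟩ ⟨b, hb⟩ :=
                add_le_add h2 le_rfl
            _ = 1 + (G.edist c s' +
                (G.induce (S ∪ T)).edist ⟨(s' : V), Set.mem_union_left T s'.2⟩ ⟨b, hb⟩) := by
                ring
            _ ≤ 1 + (q'.length : ℕ∞) := add_le_add le_rfl hle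
            _ = _ := hlen.symm

/-- If `T` is a union of connected components of `G - S`, then for `u, v ∈ T`, the distance
from `u` to `v` in `G` is the minimum of the distance from `u` to `v` in `G[S ∪ T]` and the
infimum over `s, s' ∈ S` of the distance from `u` to `s` in `G[S ∪ T]`, plus the distance
from `s` to `s'` in `G`, plus the distance from `s'` to `v` in `G[S ∪ T]`. -/
theorem edist_within_T {V : Type*} (G : SimpleGraph V) (S T : Set V)
    (hdisj : Disjoint S T)
    (hT : ∀ v ∈ T, ∀ w, G.Adj v w → w ∈ T ∪ S)
    (u v : V) (hu : u ∈ T) (hv : v ∈ T) :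
    G.edist u v =
      min ((G.induce (S ∪ T)).edist ⟨u, Set.mem_union_right S hu⟩
            ⟨v, Set.mem_union_right S hv⟩)
        (⨅ s : S, ⨅ s' : S,
          ((G.induce (S ∪ T)).edist ⟨u, Set.mem_union_right S hu⟩
              ⟨(s : V), Set.mem_union_left T s.2⟩ +
            G.edist s s' +
            (G.induce (S ∪ T)).edist ⟨(s' : V), Set.mem_union_left T s'.2⟩
              ⟨v, Set.mem_union_right S hv⟩)) := by
  refine le_antisymm ?_ ?_
  · refine le_min (edist_le_edist_induce G _ _ _) ?_
    refine le_iInf fun s => le_iInf fun s' => ?_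
    calc G.edist u v ≤ G.edist u s + G.edist s v := SimpleGraph.edist_triangle
      _ ≤ G.edist u s + (G.edist s s' + G.edist s' v) :=
          add_le_add le_rfl SimpleGraph.edist_triangle
      _ = G.edist u s + G.edist s s' + G.edist s' v := by ring
      _ ≤ _ := by
          refine add_le_add (add_le_add (edist_le_edist_induce G _ _ _) le_rfl)
            (edist_le_edist_induce G _ _ _)
  · rcases eq_or_ne (G.edist u v) ⊤ with h | h
    · exact h ▸ le_top
    · obtain ⟨p, hp⟩ := exists_walk_of_edist_ne_top h
      rcases (edist_key G S T hT p.length u v (Set.mem_union_right S hv) p rfl).1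
          (Set.mem_union_right S hu) with h1 | ⟨s, s', h1⟩
      · exact le_trans (min_le_left _ _) (hp ▸ h1)
      · refine le_trans (min_le_right _ _) ?_
        exact le_trans (iInf₂_le s s') (hp ▸ h1)
end
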